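/- Let p be a prime and let V be a finite-dimensional vector space over ZMod p with an internal direct sum decomposition V = V1 ⊕ V2 where V1 and V2 have equal dimension. Let G0 ≤ GL(V) be a subgroup such that every element of G0 maps the set {V1, V2} of subspaces to itself, and suppose that B = (V1 ∪ V2) \ {0} is a single G0-orbit. Then the graph Γ with vertex set V in which distinct u, v are adjacent if and only if u − v ∈ B (the orbital graph of the affine group V ⋊ G0 arising from the suborbit B) is isomorphic, as a simple graph, to the Hamming graph H(2, |V1|): the graph on V1 × V2 in which two distinct pairs are adjacent if and only if they agree in exactly one coordinate. -/

import Mathlib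

/-- The orbital graph of an affine group arising from the suborbit
`B = (V₁ ∪ V₂) \ {0}`: distinct `u, v` are adjacent iff `u - v ∈ B`. -/
def diffGraph {p : ℕ} {V : Type*} [AddCommGroup V] [Module (ZMod p) V]
    (V1 V2 : Submodule (ZMod p) V) : SimpleGraph V where
  Adj u v := u - v ∈ (((V1 : Set V) ∪ (V2 : Set V)) \ {0})
  symm := by
    constructor
    intro u v h
    obtain ⟨h1, h2⟩ := h
    have h2' : v - u ∉ ({0} : Set V) := by
      simp only [Set.mem_singleton_iff] at h2 ⊢
      intro hc
      apply h2
      have huv : u - v = -(v - u) := by abel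
      rw [huv, hc, neg_zero]
    refine ⟨?_, h2'⟩
    have key : v - u = -(u - v) := by abel
    rw [key]
    rcases h1 with h1 | h1
    · exact Or.inl (V1.neg_mem h1)
    · exact Or.inr (V2.neg_mem h1)
  loopless := by
    constructor
    intro v h
    exact h.2 (by simp)

/-- The Hamming graph `H(2, k)` on pairs: two distinct pairs are adjacent iff they
agree in exactly one coordinate. -/
def hammingTwo (α β : Type*) : SimpleGraph (α × β) where
  Adj x y := (x.1 = y.1 ∧ x.2 ≠ y.2) ∨ (x.1 ≠ y.1 ∧ x.2 = y.2)
  symm := by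
    constructor
    intro x y h
    rcases h with ⟨h1, h2⟩ | ⟨h1, h2⟩
    · exact Or.inl ⟨h1.symm, h2.symm⟩
    · exact Or.inr ⟨h1.symm, h2.symm⟩
  loopless := by
    constructor
    intro x h
    rcases h with ⟨_, h⟩ | ⟨h, _⟩ <;> exact h rfl

/-- If `G₀ ≤ GL(V)` stabilises `{V₁, V₂}` where `V = V₁ ⊕ V₂` with `dim V₁ = dim V₂`,
and `(V₁ ∪ V₂) \ {0}` is a single `G₀`-orbit, then the corresponding orbital graph of
the affine group `V ⋊ G₀` is isomorphic to the Hamming graph `H(2, |V₁|)`. -/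
theorem orbital_graph_iso_hamming (p : ℕ) [Fact p.Prime] {V : Type*} [AddCommGroup V]
    [Module (ZMod p) V] [FiniteDimensional (ZMod p) V]
    (V1 V2 : Submodule (ZMod p) V) (hcompl : IsCompl V1 V2)
    (hdim : Module.finrank (ZMod p) V1 = Module.finrank (ZMod p) V2)
    (G0 : Subgroup (V ≃ₗ[ZMod p] V))
    (hstab : ∀ g ∈ G0,
      (V1.map (g : V →ₗ[ZMod p] V) = V1 ∧ V2.map (g : V →ₗ[ZMod p] V) = V2) ∨
      (V1.map (g : V →ₗ[ZMod p] V) = V2 ∧ V2.map (g : V →ₗ[ZMod p] V) = V1))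
    (hB : ∃ v : V, (((V1 : Set V) ∪ (V2 : Set V)) \ {0}) = {w : V | ∃ g ∈ G0, g v = w}) :
    Nonempty (diffGraph V1 V2 ≃g hammingTwo V1 V2) := by
  set e := (Submodule.prodEquivOfIsCompl V1 V2 hcompl).symm with he
  have hmem1 : ∀ x : V, x ∈ V1 ↔ (e x).2 = 0 := by
    intro x
    constructor
    · intro hx
      have := Submodule.prodEquivOfIsCompl_symm_apply_left V1 V2 hcompl (⟨x, hx⟩ : V1)
      simp only [he, this]
    · intro hx
      have : x = ((e x).1 : V) + ((e x).2 : V) := by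
        conv_lhs => rw [show x = (Submodule.prodEquivOfIsCompl V1 V2 hcompl) (e x) by
          simp only [he, LinearEquiv.apply_symm_apply]]
        rw [Submodule.coe_prodEquivOfIsCompl']
      rw [this, hx]
      simpa using (e x).1.2
  have hmem2 : ∀ x : V, x ∈ V2 ↔ (e x).1 = 0 := by
    intro x
    constructor
    · intro hx
      have := Submodule.prodEquivOfIsCompl_symm_apply_right V1 V2 hcompl (⟨x, hx⟩ : V2)
      simp only [he, this]
    · intro hx
      have : x = ((e x).1 : V) + ((e x).2 : V) := by
        conv_lhs => rw [show x = (Submodule.prodEquivOfIsCompl V1 V2 hcompl) (e x) by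
          simp only [he, LinearEquiv.apply_symm_apply]]
        rw [Submodule.coe_prodEquivOfIsCompl']
      rw [this, hx]
      simpa using (e x).2.2
  refine ⟨⟨e.toEquiv, ?_⟩⟩
  intro u v
  have hd : e (u - v) = e u - e v := map_sub e u v
  have h1 : u - v ∈ V1 ↔ (e u).2 = (e v).2 := by
    rw [hmem1, hd, Prod.snd_sub, sub_eq_zero]
  have h2 : u - v ∈ V2 ↔ (e u).1 = (e v).1 := by
    rw [hmem2, hd, Prod.fst_sub, sub_eq_zero]
  have h0 : u - v = 0 ↔ e u = e v := by
    rw [show u - v = 0 ↔ u = v from sub_eq_zero, e.injective.eq_iff.symm]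
  simp only [hammingTwo, diffGraph, Set.mem_diff, Set.mem_union, SetLike.mem_coe,
    Set.mem_singleton_iff, h1, h2, h0, Prod.ext_iff, LinearEquiv.coe_toEquiv]
  tauto
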